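/- Let d ≥ 2, m ≥ 1, ω ∈ Ω_{d,m}, and ξ ∈ X^ℕ. Define E_2 = {ξ ∈ X^ℕ : ξ_n ∈ {0, d−1} for all sufficiently large n} ∖ Cof((d−1)^ℕ) and E_1 = X^ℕ ∖ E_2. Then the simple Schreier graph Γ_ξ has exactly two ends (its space of ends has cardinality 2) if and only if ξ ∈ E_2, and exactly one end (its space of ends has cardinality 1) if and only if ξ ∈ E_1. -/

import Mathlib

open MeasureTheory

noncomputable section

/-- The boundary of the `d`-regular rooted tree: infinite words over `X = {0,…,d-1}`,
identified with `ZMod d`. -/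
abbrev Bd (d : ℕ) : Type := ℕ → ZMod d
/-- The rooted automorphism `a`: adds 1 (mod `d`) to the first letter. -/
def aMap (d : ℕ) (ξ : Bd d) : Bd d := fun n => if n = 0 then ξ 0 + 1 else ξ n

open scoped Classical in
/-- The spinal automorphism `b_ω`: if `ξ` starts with `(d-1)^r 0`, add `ω r b` to the
letter at position `r + 1`; otherwise fix `ξ`. -/
def bMap (d m : ℕ) (ω : ℕ → ((Fin m → ZMod d) →+ ZMod d)) (b : Fin m → ZMod d)
    (ξ : Bd d) : Bd d := fun n =>
  if n ≠ 0 ∧ (∀ i, i < n - 1 → ξ i = (d : ZMod d) - 1) ∧ ξ (n - 1) = 0 then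
    ξ n + ω (n - 1) b
  else ξ n
/-- The spinal generating set `S = {a^j : 1 ≤ j ≤ d-1} ∪ {b_ω : b ∈ B ∖ {0}}`,
as a set of self-maps of the boundary. -/
def genSet (d m : ℕ) (ω : ℕ → ((Fin m → ZMod d) →+ ZMod d)) : Set (Bd d → Bd d) :=
  {f | ∃ j, 1 ≤ j ∧ j ≤ d - 1 ∧ f = (aMap d)^[j]} ∪ {f | ∃ b, b ≠ 0 ∧ f = bMap d m ω b}
/-- Membership in `Ω_{d,m}`: all `ω_n` are surjective and `⋂_{j ≥ i} ker ω_j = {0}`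
for every `i ≥ 0`. -/
def InOmega (d m : ℕ) (ω : ℕ → ((Fin m → ZMod d) →+ ZMod d)) : Prop :=
  (∀ n, Function.Surjective (ω n)) ∧
  ∀ i : ℕ, ∀ b : Fin m → ZMod d, (∀ j, i ≤ j → ω j b = 0) → b = 0
/-- Two boundary points are cofinal if they agree at all sufficiently large positions. -/
def Cofinal {d : ℕ} (ξ η : Bd d) : Prop := ∃ N, ∀ n, N ≤ n → ξ n = η n

/-- The cofinality class of `ξ`. -/
def Cof {d : ℕ} (ξ : Bd d) : Set (Bd d) := {η | Cofinal ξ η}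

theorem self_mem_Cof {d : ℕ} (ξ : Bd d) : ξ ∈ Cof ξ := ⟨0, fun _ _ => rfl⟩
/-- The set `E_2 = X^*{0, d-1}^ℕ ∖ Cof((d-1)^ℕ)`: points whose letters eventually all lie
in `{0, d-1}`, excluding the cofinality class of the constant word `d-1`. -/
def E2set (d : ℕ) : Set (Bd d) :=
  {ξ | ∃ N, ∀ n, N ≤ n → ξ n = 0 ∨ ξ n = (d : ZMod d) - 1} \ Cof (fun _ => (d : ZMod d) - 1)

/-- The simple Schreier graph `Γ_ξ` on the cofinality class of `ξ`: distinct `u, v` are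
adjacent iff `s · u = v` for some `s ∈ S`. -/
def schreierSimple (d m : ℕ) (ω : ℕ → ((Fin m → ZMod d) →+ ZMod d)) (ξ : Bd d) :
    SimpleGraph ↥(Cof ξ) :=
  SimpleGraph.fromRel (fun u v => ∃ f ∈ genSet d m ω, f (u : Bd d) = (v : Bd d))


open CategoryTheory

namespace EndsCount

variable {V : Type*} {G : SimpleGraph V}

/-- Guarded relation: adjacency staying outside `K`. -/
def GRel (G : SimpleGraph V) (K : Set V) (u v : V) : Prop :=
  G.Adj u v ∧ u ∉ K ∧ v ∉ K

lemma mk_eq_of_chain {K : Set V} {u v : V} (hu : u ∉ K)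
    (h : Relation.ReflTransGen (GRel G K) u v) :
    ∃ hv : v ∉ K, G.componentComplMk hu = G.componentComplMk hv := by
  induction h with
  | refl => exact ⟨hu, rfl⟩
  | tail _ hbc ih =>
    obtain ⟨hb, e⟩ := ih
    exact ⟨hbc.2.2, e.trans (G.componentComplMk_eq_of_adj hb hbc.2.2 hbc.1)⟩

lemma lab_eq_of_mk_eq {r : ℕ} (lab : V → Fin r) {K : Set V}
    (closed : ∀ u v : V, u ∉ K → v ∉ K → G.Adj u v → lab u = lab v)
    {u v : V} (hu : u ∉ K) (hv : v ∉ K)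
    (h : G.componentComplMk hu = G.componentComplMk hv) : lab u = lab v := by
  rw [SimpleGraph.ConnectedComponent.eq] at h
  obtain ⟨w⟩ := h
  have key : ∀ (a b : ↥(Kᶜ)), (G.induce Kᶜ).Walk a b → lab ↑a = lab ↑b := by
    intro a b p
    induction p with
    | nil => rfl
    | cons hadj _ ih =>
      rename_i x y z _
      exact (closed ↑x ↑y x.prop y.prop hadj).trans ih
  exact key _ _ w

theorem card_end_eq (r : ℕ) (F : ℕ → Finset V)
    (Fmono : ∀ {a b : ℕ}, a ≤ b → F a ⊆ F b)
    (Fcof : ∀ K : Finset V, ∃ n, K ⊆ F n)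
    (lab : V → Fin r)
    (closed : ∀ (n : ℕ) (u v : V), u ∉ (F n : Set V) → v ∉ (F n : Set V) →
        G.Adj u v → lab u = lab v)
    (conn : ∀ (n : ℕ) (u v : V), u ∉ (F n : Set V) → v ∉ (F n : Set V) → lab u = lab v →
        Relation.ReflTransGen (GRel G (F n : Set V)) u v)
    (surj : ∀ (n : ℕ) (b : Fin r), ∃ v : V, v ∉ (F n : Set V) ∧ lab v = b) :
    Nat.card G.end = r := by
  classical
  -- the key comparison lemma
  have mkK : ∀ (K : Finset V) (n : ℕ), (K : Set V) ⊆ (F n : Set V) →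
      ∀ (u v : V) (hu : u ∉ (F n : Set V)) (hv : v ∉ (F n : Set V)), lab u = lab v →
      ∀ (huK : u ∉ (K : Set V)) (hvK : v ∉ (K : Set V)),
      G.componentComplMk huK = G.componentComplMk hvK := by
    intro K n hKF u v hu hv hl huK hvK
    obtain ⟨hv', e⟩ := mk_eq_of_chain hu (conn n u v hu hv hl)
    have := congrArg (SimpleGraph.ComponentCompl.hom hKF) e
    rwa [SimpleGraph.ComponentCompl.hom_mk, SimpleGraph.ComponentCompl.hom_mk] at this
  -- choice data
  have nK : ∀ K : (Finset V)ᵒᵖ, ∃ n, K.unop ⊆ F n := fun K => Fcof K.unop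
  let nn : (Finset V)ᵒᵖ → ℕ := fun K => (nK K).choose
  have hnn : ∀ K : (Finset V)ᵒᵖ, (K.unop : Set V) ⊆ (F (nn K) : Set V) := fun K => by
    intro x hx; exact (nK K).choose_spec hx
  let wit : ℕ → Fin r → V := fun n b => (surj n b).choose
  have hwit : ∀ n b, wit n b ∉ (F n : Set V) ∧ lab (wit n b) = b := fun n b =>
    (surj n b).choose_spec
  have hwit' : ∀ {n n' : ℕ}, n ≤ n' → ∀ b, wit n' b ∉ (F n : Set V) := by
    intro n n' h b hb
    exact (hwit n' b).1 (Fmono h hb)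
  -- the canonical section for label b
  let sval : Fin r → ∀ K : (Finset V)ᵒᵖ, G.ComponentCompl (K.unop : Set V) := fun b K =>
    G.componentComplMk (v := wit (nn K) b) (fun h => (hwit (nn K) b).1 (hnn K h))
  have hsec : ∀ b, sval b ∈ G.end := by
    intro b K L f
    have hLK : (L.unop : Finset V) ⊆ K.unop := le_of_op_hom f
    change SimpleGraph.ComponentCompl.hom (le_of_op_hom f) (sval b K) = sval b L
    simp only [SimpleGraph.componentComplFunctor_map, sval]
    rw [SimpleGraph.ComponentCompl.hom_mk]
    set n3 := max (nn K) (nn L) with hn3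
    have h1 : wit n3 b ∉ (F (nn K) : Set V) := hwit' (le_max_left _ _) b
    have h2 : wit n3 b ∉ (F (nn L) : Set V) := hwit' (le_max_right _ _) b
    have hLFK : (L.unop : Set V) ⊆ (F (nn K) : Set V) := by
      intro x hx
      exact hnn K (by exact_mod_cast hLK (by exact_mod_cast hx))
    have e1 : G.componentComplMk (v := wit (nn K) b)
        (fun h => (hwit (nn K) b).1 (hLFK h)) =
        G.componentComplMk (v := wit n3 b) (fun h => h1 (hLFK h)) :=
      mkK L.unop (nn K) hLFK _ _ (hwit (nn K) b).1 h1
        (((hwit (nn K) b).2).trans ((hwit n3 b).2).symm) _ _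
    have e2 : G.componentComplMk (v := wit (nn L) b)
        (fun h => (hwit (nn L) b).1 (hnn L h)) =
        G.componentComplMk (v := wit n3 b) (fun h => h2 (hnn L h)) :=
      mkK L.unop (nn L) (hnn L) _ _ (hwit (nn L) b).1 h2
        (((hwit (nn L) b).2).trans ((hwit n3 b).2).symm) _ _
    exact e1.trans e2.symm
  let Ψ : Fin r → G.end := fun b => ⟨sval b, hsec b⟩
  -- the label of an end
  have Φdata : ∀ s : G.end, ∃ (v : V) (hv : v ∉ ((F 0 : Finset V) : Set V)),
      s.val (Opposite.op (F 0)) = G.componentComplMk hv := by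
    intro s
    obtain ⟨v, hv, e⟩ := (s.val (Opposite.op (F 0))).exists_eq_mk
    exact ⟨v, hv, e.symm⟩
  let Φ : G.end → Fin r := fun s => lab (Φdata s).choose
  -- representing s at any level n
  have repr : ∀ (s : G.end) (n : ℕ) (v : V) (hv : v ∉ (F n : Set V)),
      s.val (Opposite.op (F n)) = G.componentComplMk hv → lab v = Φ s := by
    intro s n v hv hs
    obtain ⟨hv0, hs0⟩ := (Φdata s).choose_spec
    have hmor : Opposite.op (F n) ⟶ Opposite.op (F 0) :=
      opHomOfLE (by exact_mod_cast Fmono (Nat.zero_le n))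
    have h2 := SimpleGraph.end_hom_mk_of_mk (G := G) (s := s.val) s.prop hmor hv hs
    have h3 := hs0.symm.trans h2
    exact lab_eq_of_mk_eq lab (closed 0) _ _ h3.symm
  have ΦΨ : ∀ b, Φ (Ψ b) = b := by
    intro b
    have h0 : (Ψ b).val (Opposite.op (F 0)) =
        G.componentComplMk (v := wit (nn (Opposite.op (F 0))) b)
          (fun h => (hwit (nn (Opposite.op (F 0))) b).1 (hnn (Opposite.op (F 0)) h)) := rfl
    have := repr (Ψ b) 0 _ _ h0
    rw [← this, (hwit _ b).2]
  have inj : Function.Injective Φ := by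
    intro s t hst
    apply Subtype.ext
    funext K
    obtain ⟨n, hn⟩ := Fcof K.unop
    obtain ⟨vs, hvs, es⟩ := (s.val (Opposite.op (F n))).exists_eq_mk
    obtain ⟨vt, hvt, et⟩ := (t.val (Opposite.op (F n))).exists_eq_mk
    have hnset : (K.unop : Set V) ⊆ (F n : Set V) := by exact_mod_cast hn
    have hmor : Opposite.op (F n) ⟶ K := opHomOfLE hn
    have hs' := SimpleGraph.end_hom_mk_of_mk (G := G) (s := s.val) s.prop hmor hvs es.symm
    have ht' := SimpleGraph.end_hom_mk_of_mk (G := G) (s := t.val) t.prop hmor hvt et.symm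
    rw [hs', ht']
    apply mkK K.unop n hnset _ _ hvs hvt
    rw [repr s n vs hvs es.symm, repr t n vt hvt et.symm, hst]
  have surjΦ : Function.Surjective Φ := fun b => ⟨Ψ b, ΦΨ b⟩
  have : Nat.card G.end = Nat.card (Fin r) := Nat.card_eq_of_bijective Φ ⟨inj, surjΦ⟩
  simpa using this

end EndsCount

namespace Spinal

open Relation

variable {d m : ℕ} (ω : ℕ → ((Fin m → ZMod d) →+ ZMod d)) (ξ : Bd d)

/-- The letter `d-1` in `ZMod d`. -/
noncomputable abbrev eL (d : ℕ) : ZMod d := (d : ZMod d) - 1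

/-- One-step move relation underlying the Schreier graph. -/
def MoveP (d : ℕ) (x y : Bd d) : Prop :=
  (∀ i, i ≠ 0 → x i = y i) ∨
  (∃ k, (∀ i, i ≠ k + 1 → x i = y i) ∧ (∀ i, i < k → x i = eL d) ∧ x k = 0)

section Basic

variable (hd : 2 ≤ d)
include hd

lemma e_ne_zero : eL d ≠ 0 := by
  haveI : NeZero d := ⟨by omega⟩
  haveI : Fact (1 < d) := ⟨by omega⟩
  have h0 : (d : ZMod d) = 0 := ZMod.natCast_self d
  have h1 : (1 : ZMod d) ≠ 0 := one_ne_zero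
  intro h
  apply h1
  rw [eL, h0, zero_sub, neg_eq_zero] at h
  exact h

lemma zero_ne_e : (0 : ZMod d) ≠ eL d := (e_ne_zero hd).symm

lemma one_ne_zero' : (1 : ZMod d) ≠ 0 := by
  haveI : Fact (1 < d) := ⟨by omega⟩
  exact one_ne_zero

end Basic

lemma aMap_iter (j : ℕ) (x : Bd d) :
    (aMap d)^[j] x = fun n => if n = 0 then x 0 + j else x n := by
  induction j with
  | zero =>
    funext n
    by_cases h : n = 0 <;> simp [h]
  | succ j ih =>
    rw [Function.iterate_succ_apply', ih]
    funext n
    rcases eq_or_ne n 0 with rfl | hn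
    · simp [aMap]
      push_cast
      ring
    · simp [aMap, hn]

/-- The `bMap` condition can hold at (at most) one position. -/
lemma bcond_unique (hd : 2 ≤ d) (x : Bd d) {n n' : ℕ}
    (h : n ≠ 0 ∧ (∀ i, i < n - 1 → x i = (d : ZMod d) - 1) ∧ x (n - 1) = 0)
    (h' : n' ≠ 0 ∧ (∀ i, i < n' - 1 → x i = (d : ZMod d) - 1) ∧ x (n' - 1) = 0) :
    n = n' := by
  by_contra hne
  rcases Nat.lt_or_ge n n' with hlt | hge
  · have h1 : n - 1 < n' - 1 := by omega
    have := h'.2.1 _ h1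
    rw [h.2.2] at this
    exact zero_ne_e hd this
  · have hlt : n' < n := by omega
    have h1 : n' - 1 < n - 1 := by omega
    have := h.2.1 _ h1
    rw [h'.2.2] at this
    exact zero_ne_e hd this

lemma moveP_of_gen (hd : 2 ≤ d) {f : Bd d → Bd d} (hf : f ∈ genSet d m ω) (x : Bd d) :
    MoveP d x (f x) := by
  classical
  rcases hf with ⟨j, _, _, rfl⟩ | ⟨b, _, rfl⟩
  · left
    intro i hi
    rw [aMap_iter]
    simp [hi]
  · by_cases hex : ∃ n, n ≠ 0 ∧ (∀ i, i < n - 1 → x i = (d : ZMod d) - 1) ∧ x (n - 1) = 0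
    · obtain ⟨n, hn⟩ := hex
      right
      refine ⟨n - 1, ?_, fun i hi => hn.2.1 i hi, hn.2.2⟩
      intro i hi
      have hin : i ≠ n := by omega
      simp only [bMap]
      rw [if_neg]
      intro hcond
      exact hin (bcond_unique hd x hcond hn)
    · left
      intro i _
      simp only [bMap]
      rw [if_neg]
      intro hcond
      exact hex ⟨i, hcond⟩

lemma moveP_symm {x y : Bd d} (h : MoveP d x y) : MoveP d y x := by
  rcases h with h | ⟨k, h1, h2, h3⟩
  · exact Or.inl fun i hi => (h i hi).symm
  · refine Or.inr ⟨k, fun i hi => (h1 i hi).symm, fun i hi => ?_, ?_⟩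
    · rw [← h1 i (by omega)]; exact h2 i hi
    · rw [← h1 k (by omega)]; exact h3

lemma gen_of_moveP (hd : 2 ≤ d) (hω : InOmega d m ω) {x y : Bd d}
    (hm : MoveP d x y) (hne : x ≠ y) : ∃ f ∈ genSet d m ω, f x = y := by
  classical
  have : NeZero d := ⟨by omega⟩
  rcases hm with h | ⟨k, h1, h2, h3⟩
  · -- coordinate 0 move
    have hne0 : x 0 ≠ y 0 := by
      intro h0
      apply hne
      funext i
      rcases eq_or_ne i 0 with rfl | hi
      · exact h0
      · exact h i hi
    refine ⟨(aMap d)^[(y 0 - x 0).val], Or.inl ⟨(y 0 - x 0).val, ?_, ?_, rfl⟩, ?_⟩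
    · have : y 0 - x 0 ≠ 0 := fun hc => hne0 (by linear_combination (norm := ring_nf) -hc)
      have := ZMod.val_pos.mpr this
      omega
    · have := ZMod.val_lt (y 0 - x 0)
      omega
    · rw [aMap_iter]
      funext i
      rcases eq_or_ne i 0 with rfl | hi
      · have hv : ((ZMod.val (y 0 - x 0) : ℕ) : ZMod d) = y 0 - x 0 :=
          ZMod.natCast_rightInverse (y 0 - x 0)
        simp only [eq_self_iff_true, if_true, hv]
        ring
      · simp only [if_neg hi]
        exact h i hi
  · -- coordinate k+1 move
    have hne1 : x (k + 1) ≠ y (k + 1) := by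
      intro h0
      apply hne
      funext i
      rcases eq_or_ne i (k + 1) with rfl | hi
      · exact h0
      · exact h1 i hi
    have hc : y (k + 1) - x (k + 1) ≠ 0 := fun hc => hne1 (by
      linear_combination (norm := ring_nf) -hc)
    obtain ⟨b, hb⟩ := hω.1 k (y (k + 1) - x (k + 1))
    have hbne : b ≠ 0 := by
      rintro rfl
      rw [map_zero] at hb
      exact hc hb.symm
    refine ⟨bMap d m ω b, Or.inr ⟨b, hbne, rfl⟩, ?_⟩
    have hcond : (k + 1) ≠ 0 ∧ (∀ i, i < (k + 1) - 1 → x i = (d : ZMod d) - 1) ∧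
        x ((k + 1) - 1) = 0 := by
      exact ⟨by omega, fun i hi => h2 i hi, h3⟩
    funext i
    rcases eq_or_ne i (k + 1) with rfl | hi
    · simp only [bMap, if_pos hcond]
      rw [show (k + 1 - 1) = k from rfl, hb]
      ring
    · simp only [bMap]
      rw [if_neg, h1 i hi]
      intro hcond'
      exact hi (bcond_unique hd x hcond' hcond)

lemma adj_iff (hd : 2 ≤ d) (hω : InOmega d m ω) (u v : ↥(Cof ξ)) :
    (schreierSimple d m ω ξ).Adj u v ↔ ((u : Bd d) ≠ (v : Bd d) ∧ MoveP d ↑u ↑v) := by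
  rw [schreierSimple, SimpleGraph.fromRel_adj]
  constructor
  · rintro ⟨hne, h | h⟩
    · obtain ⟨f, hf, hfx⟩ := h
      exact ⟨fun hc => hne (Subtype.ext hc), hfx ▸ moveP_of_gen ω hd hf ↑u⟩
    · obtain ⟨f, hf, hfx⟩ := h
      refine ⟨fun hc => hne (Subtype.ext hc), ?_⟩
      exact moveP_symm (hfx ▸ moveP_of_gen ω hd hf ↑v)
  · rintro ⟨hne, hm⟩
    exact ⟨fun hc => hne (congrArg _ hc), Or.inl (gen_of_moveP ω hd hω hm hne)⟩

/-! ### Chains and navigation -/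

section Chains

variable {α : Type*}

lemma chain_invar {R : α → α → Prop} {Q : α → Prop}
    (hpres : ∀ a b, R a b → Q a → Q b) {x y : α}
    (h : ReflTransGen R x y) (hx : Q x) : Q y := by
  induction h with
  | refl => exact hx
  | tail _ h2 ih => exact hpres _ _ h2 ih

lemma guard_lift {R R' : α → α → Prop} {Q : α → Prop}
    (hpres : ∀ a b, R a b → Q a → Q b)
    (himp : ∀ a b, R a b → Q a → R' a b) {x y : α} (hx : Q x)
    (h : ReflTransGen R x y) : ReflTransGen R' x y := by
  induction h with
  | refl => exact ReflTransGen.refl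
  | tail h1 h2 ih => exact ih.tail (himp _ _ h2 (chain_invar hpres h1 hx))

lemma subtype_lift {S : Set α} {R : α → α → Prop} {R' : ↥S → ↥S → Prop}
    (hpres : ∀ a b, R a b → a ∈ S → b ∈ S)
    (himp : ∀ a b (ha : a ∈ S) (hb : b ∈ S), R a b → R' ⟨a, ha⟩ ⟨b, hb⟩)
    {x y : α} (hx : x ∈ S) (h : ReflTransGen R x y) :
    ∃ hy : y ∈ S, ReflTransGen R' ⟨x, hx⟩ ⟨y, hy⟩ := by
  induction h with
  | refl => exact ⟨hx, ReflTransGen.refl⟩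
  | tail _ h2 ih =>
    obtain ⟨hb, hch⟩ := ih
    exact ⟨hpres _ _ h2 hb, hch.tail (himp _ _ hb (hpres _ _ h2 hb) h2)⟩

end Chains

/-- `x` differs from `ξ` at some coordinate `≥ n`. -/
def OutD (ξ : Bd d) (n : ℕ) (x : Bd d) : Prop := ∃ i, n ≤ i ∧ x i ≠ ξ i

/-- Guarded move relation at stage `n`. -/
def Rn (ξ : Bd d) (n : ℕ) (x y : Bd d) : Prop :=
  x ≠ y ∧ MoveP d x y ∧ OutD ξ n x ∧ OutD ξ n y

/-- `x` has its largest difference from `ξ` exactly at position `p ≥ n`. -/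
def TopAt (ξ : Bd d) (n p : ℕ) (x : Bd d) : Prop :=
  n ≤ p ∧ x p ≠ ξ p ∧ ∀ i, p < i → x i = ξ i

/-- Moves touching only coordinates `< p`. -/
def MvB (d : ℕ) (p : ℕ) (x y : Bd d) : Prop :=
  x ≠ y ∧ MoveP d x y ∧ ∀ i, p ≤ i → x i = y i

/-- Overwrite the first `p` coordinates of `x` with `w`. -/
def pre (p : ℕ) (w : ℕ → ZMod d) (x : Bd d) : Bd d := fun i => if i < p then w i else x i

lemma rn_symm {n : ℕ} : Symmetric (Rn ξ n) := by
  rintro x y ⟨h1, h2, h3, h4⟩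
  exact ⟨h1.symm, moveP_symm h2, h4, h3⟩

lemma pre_lt {p i : ℕ} (h : i < p) (w : ℕ → ZMod d) (x : Bd d) : pre p w x i = w i :=
  if_pos h

lemma pre_ge {p i : ℕ} (h : ¬ i < p) (w : ℕ → ZMod d) (x : Bd d) : pre p w x i = x i :=
  if_neg h

/-- The prefix `(d-1)^(p-1) 0`, as a function. -/
noncomputable def gwf (d : ℕ) (p : ℕ) : ℕ → ZMod d := fun i => if i + 1 = p then 0 else eL d

lemma gwf_ne {p i : ℕ} (h : i + 1 ≠ p) : gwf d p i = eL d := if_neg h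

lemma gwf_eq {p i : ℕ} (h : i + 1 = p) : gwf d p i = 0 := if_pos h

lemma nav (p : ℕ) (w : ℕ → ZMod d) (x : Bd d) :
    ReflTransGen (MvB d p) x (pre p w x) := by
  induction p generalizing w x with
  | zero =>
    have h : pre 0 w x = x := by funext i; exact pre_ge (by omega) w x
    rw [h]
  | succ p ih =>
    by_cases hc : w p = x p
    · have h : pre (p + 1) w x = pre p w x := by
        funext i
        rcases lt_trichotomy i p with h1 | rfl | h1
        · rw [pre_lt h1, pre_lt (by omega)]
        · rw [pre_lt (by omega), pre_ge (by omega), hc]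
        · rw [pre_ge (by omega), pre_ge (by omega)]
      rw [h]
      exact ReflTransGen.mono (fun a b hab => ⟨hab.1, hab.2.1, fun i hi => hab.2.2 i (by omega)⟩) _ _ (ih w x)
    · cases p with
      | zero =>
        apply ReflTransGen.single
        refine ⟨?_, Or.inl fun i hi => ?_, fun i hi => ?_⟩
        · intro hEq
          apply hc
          have := congrFun hEq 0
          rw [pre_lt (by omega)] at this
          exact this.symm
        · exact (pre_ge (by omega) w x).symm
        · exact (pre_ge (by omega) w x).symm
      | succ q =>
        have c1 : ReflTransGen (MvB d (q + 2)) x (pre (q + 1) (gwf d (q + 1)) x) :=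
          ReflTransGen.mono (fun a b hab =>
            ⟨hab.1, hab.2.1, fun i hi => hab.2.2 i (by omega)⟩) _ _ (ih (gwf d (q + 1)) x)
        have hM1p : pre (q + 1) (gwf d (q + 1)) x (q + 1) = x (q + 1) :=
          pre_ge (by omega) _ x
        have step : MvB d (q + 2) (pre (q + 1) (gwf d (q + 1)) x)
            (Function.update (pre (q + 1) (gwf d (q + 1)) x) (q + 1) (w (q + 1))) := by
          refine ⟨?_, Or.inr ⟨q, ?_, ?_, ?_⟩, ?_⟩
          · intro hEq
            apply hc
            have := congrFun hEq (q + 1)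
            rw [hM1p, Function.update_self] at this
            exact this.symm
          · intro i hi
            rw [Function.update_of_ne (by omega)]
          · intro i hi
            rw [pre_lt (by omega), gwf_ne (by omega)]
          · rw [pre_lt (by omega), gwf_eq rfl]
          · intro i hi
            rw [Function.update_of_ne (by omega)]
        have c2 : ReflTransGen (MvB d (q + 2))
            (Function.update (pre (q + 1) (gwf d (q + 1)) x) (q + 1) (w (q + 1)))
            (pre (q + 1) w (Function.update (pre (q + 1) (gwf d (q + 1)) x) (q + 1)
              (w (q + 1)))) :=
          ReflTransGen.mono (fun a b hab => ⟨hab.1, hab.2.1, fun i hi => hab.2.2 i (by omega)⟩) _ _ (ih w _)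
        have hfin : pre (q + 1) w (Function.update (pre (q + 1) (gwf d (q + 1)) x) (q + 1)
            (w (q + 1))) = pre (q + 2) w x := by
          funext i
          rcases lt_trichotomy i (q + 1) with h1 | rfl | h1
          · rw [pre_lt h1, pre_lt (by omega)]
          · rw [pre_ge (by omega), Function.update_self, pre_lt (by omega)]
          · rw [pre_ge (by omega), pre_ge (by omega), Function.update_of_ne (by omega),
              pre_ge (by omega)]
        rw [hfin] at c2
        exact (c1.tail step).trans c2

lemma top_out {n p : ℕ} {x : Bd d} (h : TopAt ξ n p x) : OutD ξ n x := ⟨p, h.1, h.2.1⟩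

lemma top_unique {n n' p q : ℕ} {x : Bd d} (h : TopAt ξ n p x) (h' : TopAt ξ n' q x) :
    p = q := by
  by_contra hne
  rcases Nat.lt_or_ge p q with hlt | hge
  · exact h'.2.1 (h.2.2 q hlt)
  · exact h.2.1 (h'.2.2 p (by omega))

lemma exists_top {n : ℕ} {x : Bd d} (hx : Cofinal ξ x) (h : OutD ξ n x) :
    ∃ p, TopAt ξ n p x := by
  obtain ⟨i, hi, hne⟩ := h
  obtain ⟨Nb, hNb⟩ := hx
  have hbdd : BddAbove {j | x j ≠ ξ j} := by
    refine ⟨Nb, fun j hj => ?_⟩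
    by_contra hc
    exact hj ((hNb j (by omega)).symm)
  have hne' : {j | x j ≠ ξ j}.Nonempty := ⟨i, hne⟩
  refine ⟨sSup {j | x j ≠ ξ j}, ?_, Nat.sSup_mem hne' hbdd, fun j hj => ?_⟩
  · exact le_trans hi (le_csSup hbdd hne)
  · by_contra hc
    exact absurd (le_csSup hbdd hc) (by omega)

lemma step_k (hd : 2 ≤ d) {n k : ℕ} {x : Bd d} {c : ZMod d}
    (hpre : ∀ i, i < k → x i = eL d) (h0 : x k = 0) (hc : x (k + 1) ≠ c)
    (hOx : OutD ξ n x) (hOy : OutD ξ n (Function.update x (k + 1) c)) :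
    Rn ξ n x (Function.update x (k + 1) c) := by
  have hoff : ∀ i, i ≠ k + 1 → x i = Function.update x (k + 1) c i := by
    intro i hi
    rw [Function.update_of_ne hi]
  refine ⟨?_, Or.inr ⟨k, hoff, hpre, h0⟩, hOx, hOy⟩
  intro hEq
  apply hc
  have := congrFun hEq (k + 1)
  rwa [Function.update_self] at this

lemma collapse (hd : 2 ≤ d) {n p : ℕ} (hn : 1 ≤ n) {x y : Bd d}
    (hx : TopAt ξ n p x) (hy : TopAt ξ n p y) :
    ReflTransGen (Rn ξ n) x y := by
  classical
  have hp1 : 1 ≤ p := le_trans hn hx.1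
  obtain ⟨k, rfl⟩ : ∃ k, p = k + 1 := ⟨p - 1, by omega⟩
  set A := pre (k + 1) (gwf d (k + 1)) x with hA
  set B := pre (k + 1) (gwf d (k + 1)) y with hB
  have hApre : ∀ i, i < k → A i = eL d := fun i hi => by
    rw [hA, pre_lt (by omega), gwf_ne (by omega)]
  have hA0 : A k = 0 := by rw [hA, pre_lt (by omega), gwf_eq rfl]
  have hAp : A (k + 1) = x (k + 1) := by rw [hA, pre_ge (by omega)]
  have hBp : B (k + 1) = y (k + 1) := by rw [hB, pre_ge (by omega)]
  have hAhigh : ∀ i, k + 1 < i → A i = ξ i := fun i hi => by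
    rw [hA, pre_ge (by omega)]
    exact hx.2.2 i hi
  have hBhigh : ∀ i, k + 1 < i → B i = ξ i := fun i hi => by
    rw [hB, pre_ge (by omega)]
    exact hy.2.2 i hi
  have cx : ReflTransGen (Rn ξ n) x A := by
    refine guard_lift (R := MvB d (k + 1)) (Q := fun a => ∀ i, k + 1 ≤ i → a i = x i)
      (fun a b hab hQ i hi => (hab.2.2 i hi).symm.trans (hQ i hi))
      (fun a b hab hQ => ⟨hab.1, hab.2.1,
        ⟨k + 1, hx.1, (hQ (k + 1) le_rfl).symm ▸ hx.2.1⟩,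
        ⟨k + 1, hx.1, ((hab.2.2 (k + 1) le_rfl).symm.trans (hQ (k + 1) le_rfl)).symm ▸ hx.2.1⟩⟩)
      (fun i _ => rfl) (nav (k + 1) (gwf d (k + 1)) x)
  have cy : ReflTransGen (Rn ξ n) y B := by
    refine guard_lift (R := MvB d (k + 1)) (Q := fun a => ∀ i, k + 1 ≤ i → a i = y i)
      (fun a b hab hQ i hi => (hab.2.2 i hi).symm.trans (hQ i hi))
      (fun a b hab hQ => ⟨hab.1, hab.2.1,
        ⟨k + 1, hy.1, (hQ (k + 1) le_rfl).symm ▸ hy.2.1⟩,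
        ⟨k + 1, hy.1, ((hab.2.2 (k + 1) le_rfl).symm.trans (hQ (k + 1) le_rfl)).symm ▸ hy.2.1⟩⟩)
      (fun i _ => rfl) (nav (k + 1) (gwf d (k + 1)) y)
  have cAB : ReflTransGen (Rn ξ n) A B := by
    by_cases hxy : x (k + 1) = y (k + 1)
    · have hEq : A = B := by
        funext i
        rcases lt_trichotomy i (k + 1) with h1 | rfl | h1
        · rw [hA, hB, pre_lt h1, pre_lt h1]
        · rw [hAp, hBp, hxy]
        · rw [hAhigh i h1, ← hBhigh i h1]
      rw [hEq]
    · have hBeq : B = Function.update A (k + 1) (y (k + 1)) := by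
        funext i
        rcases eq_or_ne i (k + 1) with rfl | hi
        · rw [Function.update_self, hBp]
        · rw [Function.update_of_ne hi]
          rcases Nat.lt_or_ge i (k + 1) with h1 | h1
          · rw [hA, hB, pre_lt h1, pre_lt h1]
          · have h2 : k + 1 < i := by omega
            rw [hAhigh i h2, ← hBhigh i h2]
      rw [hBeq]
      apply ReflTransGen.single
      apply step_k ξ hd hApre hA0 (by rwa [hAp]) ⟨k + 1, hx.1, hAp.symm ▸ hx.2.1⟩
      refine ⟨k + 1, hx.1, ?_⟩
      rw [Function.update_self]
      exact hy.2.1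
  exact (cx.trans cAB).trans ((@Std.Symm.symm _ _ (@ReflTransGen.stdSymm _ _ ⟨rn_symm ξ⟩) _ _) cy)

/-! ### Scenario A: a middle letter at position `n` -/

/-- The vertex `(d-1)^k 0 ξ…` (with the `0` at position `k`). -/
noncomputable def zv (ξ : Bd d) (k : ℕ) : Bd d := fun i =>
  if i = k then 0 else if i < k then eL d else ξ i

lemma zv_k (k : ℕ) : zv ξ k k = 0 := by simp [zv]

lemma zv_low {k i : ℕ} (h : i < k) : zv ξ k i = eL d := by
  simp only [zv]
  rw [if_neg (by omega), if_pos h]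

lemma zv_high {k i : ℕ} (h : k < i) : zv ξ k i = ξ i := by
  simp only [zv]
  rw [if_neg (by omega), if_neg (by omega)]

/-- From any vertex with top difference at `k + 1 > n`, we can move down to `zv ξ k`,
provided the latter is outside `K_n`. -/
lemma down_step (hd : 2 ≤ d) {n k : ℕ} (hn : 1 ≤ n) {x : Bd d}
    (hx : TopAt ξ n (k + 1) x) (hout : OutD ξ n (zv ξ k)) :
    ReflTransGen (Rn ξ n) x (zv ξ k) := by
  have hUtop : TopAt ξ n (k + 1) (Function.update (zv ξ k) (k + 1) (x (k + 1))) := by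
    refine ⟨hx.1, ?_, fun i hi => ?_⟩
    · rw [Function.update_self]
      exact hx.2.1
    · rw [Function.update_of_ne (by omega)]
      exact zv_high ξ (by omega)
  have c1 : ReflTransGen (Rn ξ n) x (Function.update (zv ξ k) (k + 1) (x (k + 1))) :=
    collapse ξ hd hn hx hUtop
  have hZeq : Function.update (Function.update (zv ξ k) (k + 1) (x (k + 1))) (k + 1)
      (ξ (k + 1)) = zv ξ k := by
    funext i
    rcases eq_or_ne i (k + 1) with rfl | hi
    · rw [Function.update_self, zv_high ξ (by omega)]
    · rw [Function.update_of_ne hi, Function.update_of_ne hi]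
  have hpre : ∀ i, i < k → Function.update (zv ξ k) (k + 1) (x (k + 1)) i = eL d := by
    intro i hi
    rw [Function.update_of_ne (by omega)]
    exact zv_low ξ hi
  have h0 : Function.update (zv ξ k) (k + 1) (x (k + 1)) k = 0 := by
    rw [Function.update_of_ne (by omega)]
    exact zv_k ξ k
  have hc : Function.update (zv ξ k) (k + 1) (x (k + 1)) (k + 1) ≠ ξ (k + 1) := by
    rw [Function.update_self]
    exact hx.2.1
  have c2 : Rn ξ n (Function.update (zv ξ k) (k + 1) (x (k + 1))) (zv ξ k) := by
    have := step_k ξ hd hpre h0 hc ⟨k + 1, hx.1, hUtop.2.1⟩ (hZeq.symm ▸ hout)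
    rwa [hZeq] at this
  exact c1.tail c2

lemma descendA (hd : 2 ≤ d) {n : ℕ} (hn : 1 ≤ n) (h0 : ξ n ≠ 0) (hee : ξ n ≠ eL d) :
    ∀ p, ∀ x : Bd d, TopAt ξ n p x →
      ReflTransGen (Rn ξ n) x (Function.update ξ n 0) := by
  have hCn : TopAt ξ n n (Function.update ξ n 0) := by
    refine ⟨le_rfl, ?_, fun i hi => Function.update_of_ne (by omega) _ _⟩
    rw [Function.update_self]
    exact fun h => h0 h.symm
  intro p
  induction p using Nat.strong_induction_on with
  | _ p ih =>
    intro x hx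
    rcases eq_or_lt_of_le hx.1 with hpn | hpn
    · rw [← hpn] at hx
      exact collapse ξ hd hn hx hCn
    · obtain ⟨k, rfl⟩ : ∃ k, p = k + 1 := ⟨p - 1, by omega⟩
      have hZn : zv ξ k n ≠ ξ n := by
        rcases eq_or_lt_of_le (show n ≤ k by omega) with h | h
        · rw [← h, zv_k]
          exact fun hc => h0 hc.symm
        · rw [zv_low ξ h]
          exact fun hc => hee hc.symm
      have hZout : OutD ξ n (zv ξ k) := ⟨n, le_rfl, hZn⟩
      have c1 : ReflTransGen (Rn ξ n) x (zv ξ k) := down_step ξ hd hn hx hZout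
      obtain ⟨p', hp'⟩ := exists_top ξ (x := zv ξ k)
        ⟨k + 1, fun i hi => (zv_high ξ (by omega)).symm⟩ hZout
      have hp'lt : p' < k + 1 := by
        by_contra hc
        exact hp'.2.1 (zv_high ξ (by omega))
      exact c1.trans (ih p' hp'lt (zv ξ k) hp')

lemma connA (hd : 2 ≤ d) {n : ℕ} (hn : 1 ≤ n) (h0 : ξ n ≠ 0) (hee : ξ n ≠ eL d)
    {x y : Bd d} (hx : ∃ p, TopAt ξ n p x) (hy : ∃ p, TopAt ξ n p y) :
    ReflTransGen (Rn ξ n) x y := by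
  obtain ⟨p, hp⟩ := hx
  obtain ⟨q, hq⟩ := hy
  exact (descendA ξ hd hn h0 hee p x hp).trans
    ((@Std.Symm.symm _ _ (@ReflTransGen.stdSymm _ _ ⟨rn_symm ξ⟩) _ _) (descendA ξ hd hn h0 hee q y hq))

/-! ### Scenario B: all letters `≥ n` equal `d - 1` -/

/-- The tower vertex `(d-1)^p 0 c ξ…`. -/
noncomputable def twr (ξ : Bd d) (p : ℕ) (c : ZMod d) : Bd d := fun i =>
  if i < p then eL d else if i = p then 0 else if i = p + 1 then c else ξ i

lemma twr_low {p : ℕ} {c : ZMod d} {i : ℕ} (h : i < p) : twr ξ p c i = eL d := by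
  simp only [twr]
  rw [if_pos h]

lemma twr_p (p : ℕ) (c : ZMod d) : twr ξ p c p = 0 := by
  simp only [twr]
  rw [if_neg (by omega)]
  simp

lemma twr_p1 (p : ℕ) (c : ZMod d) : twr ξ p c (p + 1) = c := by
  simp only [twr]
  rw [if_neg (by omega), if_neg (by omega)]
  simp

lemma twr_high {p : ℕ} {c : ZMod d} {i : ℕ} (h : p + 1 < i) : twr ξ p c i = ξ i := by
  simp only [twr]
  rw [if_neg (by omega), if_neg (by omega), if_neg (by omega)]

/-- Climbing one step: from top difference `p` to the canonical tower with top `p + 1`,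
assuming `ξ` equals `d-1` on `[n, ∞)`. -/
lemma climbB (hd : 2 ≤ d) {n : ℕ} (hn : 1 ≤ n) (hB : ∀ i, n ≤ i → ξ i = eL d)
    {p : ℕ} {x : Bd d} (hx : TopAt ξ n p x) :
    ReflTransGen (Rn ξ n) x (twr ξ p 0) ∧ TopAt ξ n (p + 1) (twr ξ p 0) := by
  have hxp := hx.1
  have htop1 : TopAt ξ n (p + 1) (twr ξ p 0) := by
    refine ⟨by omega, ?_, fun i hi => twr_high ξ hi⟩
    rw [twr_p1, hB (p + 1) (by omega)]
    exact zero_ne_e hd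
  have hmidtop : TopAt ξ n p (twr ξ p (ξ (p + 1))) := by
    refine ⟨hxp, ?_, fun i hi => ?_⟩
    · rw [twr_p, hB p hxp]
      exact zero_ne_e hd
    · rcases eq_or_lt_of_le (show p + 1 ≤ i by omega) with h | h
      · rw [← h, twr_p1]
      · exact twr_high ξ h
  have c1 : ReflTransGen (Rn ξ n) x (twr ξ p (ξ (p + 1))) := collapse ξ hd hn hx hmidtop
  have hEq : Function.update (twr ξ p (ξ (p + 1))) (p + 1) 0 = twr ξ p 0 := by
    funext i
    rcases eq_or_ne i (p + 1) with rfl | hi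
    · rw [Function.update_self, twr_p1]
    · rw [Function.update_of_ne hi]
      rcases lt_trichotomy i p with h | rfl | h
      · rw [twr_low ξ h, twr_low ξ h]
      · rw [twr_p, twr_p]
      · rw [twr_high ξ (by omega), twr_high ξ (by omega)]
  have hc : twr ξ p (ξ (p + 1)) (p + 1) ≠ (0 : ZMod d) := by
    rw [twr_p1, hB (p + 1) (by omega)]
    exact e_ne_zero hd
  have c2 : Rn ξ n (twr ξ p (ξ (p + 1))) (twr ξ p 0) := by
    rw [← hEq]
    refine step_k ξ hd (fun i hi => twr_low ξ hi) (twr_p ξ p _) hc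
      ⟨p, hxp, hmidtop.2.1⟩ ?_
    rw [hEq]
    exact ⟨p + 1, by omega, htop1.2.1⟩
  exact ⟨c1.tail c2, htop1⟩

lemma upB (hd : 2 ≤ d) {n : ℕ} (hn : 1 ≤ n) (hB : ∀ i, n ≤ i → ξ i = eL d) :
    ∀ (j : ℕ) {p : ℕ} {x : Bd d}, TopAt ξ n p x →
      ReflTransGen (Rn ξ n) x (twr ξ (p + j) 0) ∧ TopAt ξ n (p + j + 1) (twr ξ (p + j) 0) := by
  intro j
  induction j with
  | zero => exact fun hx => climbB ξ hd hn hB hx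
  | succ j ih =>
    intro p x hx
    obtain ⟨c1, t1⟩ := ih hx
    obtain ⟨c2, t2⟩ := climbB ξ hd hn hB t1
    exact ⟨c1.trans c2, t2⟩

lemma connB (hd : 2 ≤ d) {n : ℕ} (hn : 1 ≤ n) (hB : ∀ i, n ≤ i → ξ i = eL d)
    {x y : Bd d} (hx : ∃ p, TopAt ξ n p x) (hy : ∃ p, TopAt ξ n p y) :
    ReflTransGen (Rn ξ n) x y := by
  obtain ⟨p, hp⟩ := hx
  obtain ⟨q, hq⟩ := hy
  have c1 := (upB ξ hd hn hB (max p q - p) hp).1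
  have c2 := (upB ξ hd hn hB (max p q - q) hq).1
  rw [show p + (max p q - p) = max p q by omega] at c1
  rw [show q + (max p q - q) = max p q by omega] at c2
  exact c1.trans ((@Std.Symm.symm _ _ (@ReflTransGen.stdSymm _ _ ⟨rn_symm ξ⟩) _ _) c2)

/-! ### Scenario C: eventually all letters in `{0, d-1}`, with infinitely many zeros -/

/-- Number of zeros of `ξ` in `[N, p)`. -/
noncomputable def zc (ξ : Bd d) (N p : ℕ) : ℕ :=
  ((Finset.Ico N p).filter (fun i => ξ i = 0)).card

/-- Largest position where `x` differs from `ξ` (junk if unbounded or none). -/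
noncomputable def pdd (ξ x : Bd d) : ℕ := sSup {j | x j ≠ ξ j}

lemma pdd_eq {n p : ℕ} {x : Bd d} (h : TopAt ξ n p x) : pdd ξ x = p := by
  have hbdd : BddAbove {j | x j ≠ ξ j} := by
    refine ⟨p, fun j hj => ?_⟩
    by_contra hc
    exact hj (h.2.2 j (by omega))
  apply le_antisymm
  · refine csSup_le ⟨p, h.2.1⟩ (fun j hj => ?_)
    by_contra hc
    exact hj (h.2.2 j (by omega))
  · exact le_csSup hbdd h.2.1

lemma zc_split {N a b : ℕ} (h1 : N ≤ a) (h2 : a ≤ b) :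
    zc ξ N b = zc ξ N a + ((Finset.Ico a b).filter (fun i => ξ i = 0)).card := by
  classical
  rw [zc, zc, ← Finset.Ico_union_Ico_eq_Ico h1 h2, Finset.filter_union,
    Finset.card_union_of_disjoint]
  exact Finset.disjoint_filter_filter (Finset.Ico_disjoint_Ico_consecutive N a b)

lemma zc_succ {N a : ℕ} (h : N ≤ a) :
    zc ξ N (a + 1) = zc ξ N a + (if ξ a = 0 then 1 else 0) := by
  classical
  rw [zc_split ξ h (Nat.le_succ a)]
  congr 1
  rw [Nat.Ico_succ_singleton, Finset.filter_singleton]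
  split <;> simp

lemma zc_const {N a b : ℕ} (hN : N ≤ a) (hab : a ≤ b)
    (hz : ∀ i, a ≤ i → i < b → ξ i ≠ 0) : zc ξ N b = zc ξ N a := by
  classical
  rw [zc_split ξ hN hab]
  have h : (Finset.Ico a b).filter (fun i => ξ i = 0) = ∅ := by
    apply Finset.filter_eq_empty_iff.mpr
    intro i hi
    rw [Finset.mem_Ico] at hi
    exact hz i hi.1 hi.2
  rw [h]
  simp

lemma helperC (hd : 2 ≤ d) {N n p k : ℕ} {w : Bd d} (hNn : N ≤ n)
    (hC : ∀ i, N ≤ i → ξ i = 0 ∨ ξ i = eL d)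
    (hw : TopAt ξ n p w) (hpre : ∀ i, i < k → w i = eL d) (h0 : w k = 0) (hpk : p ≤ k) :
    zc ξ N (k + 1) % 2 = zc ξ N p % 2 := by
  have hNp : N ≤ p := le_trans hNn hw.1
  rcases eq_or_lt_of_le hpk with rfl | hlt
  · have hk0 : ξ p ≠ 0 := fun hc => hw.2.1 (h0.trans hc.symm)
    rw [zc_succ ξ hNp, if_neg hk0]
    omega
  · have hxp : ξ p = 0 := by
      rcases hC p hNp with h | h
      · exact h
      · exact absurd ((hpre p hlt).trans h.symm) hw.2.1
    have hxk : ξ k = 0 := by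
      rw [← hw.2.2 k hlt]
      exact h0
    have hmid : ∀ i, p + 1 ≤ i → i < k → ξ i ≠ 0 := by
      intro i h1 h2
      rw [← hw.2.2 i (by omega), hpre i h2]
      exact e_ne_zero hd
    have e1 : zc ξ N (k + 1) = zc ξ N k + 1 := by
      rw [zc_succ ξ (by omega), if_pos hxk]
    have e2 : zc ξ N k = zc ξ N (p + 1) := zc_const ξ (by omega) (by omega) hmid
    have e3 : zc ξ N (p + 1) = zc ξ N p + 1 := by
      rw [zc_succ ξ hNp, if_pos hxp]
    omega

lemma closedC (hd : 2 ≤ d) {N n : ℕ} (hN1 : 1 ≤ N) (hNn : N ≤ n)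
    (hC : ∀ i, N ≤ i → ξ i = 0 ∨ ξ i = eL d)
    {u v : Bd d} (hu : ∃ p, TopAt ξ n p u) (hv : ∃ q, TopAt ξ n q v)
    (hne : u ≠ v) (hm : MoveP d u v) :
    zc ξ N (pdd ξ u) % 2 = zc ξ N (pdd ξ v) % 2 := by
  obtain ⟨p, hp⟩ := hu
  obtain ⟨q, hq⟩ := hv
  rw [pdd_eq ξ hp, pdd_eq ξ hq]
  rcases hm with hoff | ⟨k, hoff, hkpre, hk0⟩
  · have hp0 : p ≠ 0 := by
      have := hp.1
      omega
    have hq' : TopAt ξ n p v := by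
      refine ⟨hp.1, ?_, fun i hi => ?_⟩
      · rw [← hoff p hp0]
        exact hp.2.1
      · rw [← hoff i (by omega)]
        exact hp.2.2 i hi
    rw [top_unique ξ hq' hq]
  · have hne1 : u (k + 1) ≠ v (k + 1) := by
      intro h1
      apply hne
      funext i
      rcases eq_or_ne i (k + 1) with rfl | hi
      · exact h1
      · exact hoff i hi
    rcases lt_trichotomy p q with hlt | heq | hgt
    · have hqk : q = k + 1 := by
        by_contra hc
        have h2 : u q ≠ ξ q := by
          rw [hoff q hc]
          exact hq.2.1
        exact h2 (hp.2.2 q hlt)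
      subst hqk
      exact (helperC ξ hd hNn hC hp hkpre hk0 (by omega)).symm
    · rw [heq]
    · have hpk : p = k + 1 := by
        by_contra hc
        have h2 : v p ≠ ξ p := by
          rw [← hoff p hc]
          exact hp.2.1
        exact h2 (hq.2.2 p hgt)
      subst hpk
      refine helperC ξ hd hNn hC hq (fun i hi => ?_) ?_ (by omega)
      · rw [← hoff i (by omega)]
        exact hkpre i hi
      · rw [← hoff k (by omega)]
        exact hk0

lemma seed_main (hd : 2 ≤ d) {n : ℕ} :
    TopAt ξ n n (Function.update ξ n (if ξ n = 0 then eL d else 0)) := by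
  refine ⟨le_rfl, ?_, fun i hi => Function.update_of_ne (by omega) _ _⟩
  rw [Function.update_self]
  split
  · rename_i h
    rw [h]
    exact e_ne_zero hd
  · rename_i h
    exact fun hc => h hc.symm

lemma connC (hd : 2 ≤ d) {N n : ℕ} (hN1 : 1 ≤ N) (hNn : N ≤ n)
    (hC : ∀ i, N ≤ i → ξ i = 0 ∨ ξ i = eL d) (hq : ∃ i, n ≤ i ∧ ξ i = 0) :
    ∀ {u v : Bd d}, (∃ p, TopAt ξ n p u) → (∃ q, TopAt ξ n q v) →
      zc ξ N (pdd ξ u) % 2 = zc ξ N (pdd ξ v) % 2 →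
      ReflTransGen (Rn ξ n) u v := by
  classical
  have hn1 : 1 ≤ n := le_trans hN1 hNn
  obtain ⟨hq1n, hq1z⟩ : n ≤ Nat.find hq ∧ ξ (Nat.find hq) = 0 := Nat.find_spec hq
  set q1 := Nat.find hq with hq1def
  have hq1min : ∀ m, m < q1 → ¬(n ≤ m ∧ ξ m = 0) := fun m hm => Nat.find_min hq hm
  set Cn := Function.update ξ n (if ξ n = 0 then eL d else 0) with hCn
  have hCntop : TopAt ξ n n Cn := seed_main ξ hd
  set s1 := twr ξ q1 (ξ (q1 + 1) + 1) with hs1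
  have hs1top : TopAt ξ n (q1 + 1) s1 := by
    refine ⟨by omega, ?_, fun i hi => ?_⟩
    · rw [hs1, twr_p1]
      intro hc
      have h1 : (1 : ZMod d) = 0 := by
        calc (1 : ZMod d) = ξ (q1 + 1) + 1 - ξ (q1 + 1) := by ring
        _ = 0 := by rw [hc]; ring
      exact one_ne_zero' hd h1
    · rw [hs1]
      exact twr_high ξ hi
  have hzq1 : zc ξ N (q1 + 1) = zc ξ N n + 1 := by
    have e1 : zc ξ N (q1 + 1) = zc ξ N q1 + 1 := by
      rw [zc_succ ξ (by omega), if_pos hq1z]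
    have e2 : zc ξ N q1 = zc ξ N n := by
      refine zc_const ξ hNn hq1n (fun i h1 h2 hz0 => ?_)
      exact hq1min i h2 ⟨h1, hz0⟩
    omega
  have key : ∀ p, ∀ x : Bd d, TopAt ξ n p x →
      (zc ξ N p % 2 = zc ξ N n % 2 → ReflTransGen (Rn ξ n) x Cn) ∧
      (zc ξ N p % 2 ≠ zc ξ N n % 2 → ReflTransGen (Rn ξ n) x s1) := by
    intro p
    induction p using Nat.strong_induction_on with
    | _ p ih =>
      intro x hx
      rcases eq_or_lt_of_le hx.1 with hpn | hpn
      · rw [← hpn] at hx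
        exact ⟨fun _ => collapse ξ hd hn1 hx hCntop,
          fun hcon => absurd (by rw [← hpn]) hcon⟩
      · obtain ⟨k, rfl⟩ : ∃ k, p = k + 1 := ⟨p - 1, by omega⟩
        have hNk : N ≤ k := by omega
        rcases hC k hNk with hk0 | hke
        · by_cases hex : ∃ i, n ≤ i ∧ i < k ∧ ξ i = 0
          · obtain ⟨i0, hi0⟩ := hex
            have hkpos : 1 ≤ k := by omega
            have hrspec : n ≤ Nat.findGreatest (fun i => n ≤ i ∧ ξ i = 0) (k - 1) ∧
                ξ (Nat.findGreatest (fun i => n ≤ i ∧ ξ i = 0) (k - 1)) = 0 :=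
              Nat.findGreatest_spec (P := fun i => n ≤ i ∧ ξ i = 0) (m := i0)
                (by omega) ⟨hi0.1, hi0.2.2⟩
            set r := Nat.findGreatest (fun i => n ≤ i ∧ ξ i = 0) (k - 1) with hrdef
            have hrle : r ≤ k - 1 := Nat.findGreatest_le _
            have hrmax : ∀ j, r < j → j ≤ k - 1 → ¬(n ≤ j ∧ ξ j = 0) :=
              fun j h1 h2 => Nat.findGreatest_is_greatest h1 h2
            have hrk : r < k := by omega
            have hGtop : TopAt ξ n r (zv ξ k) := by
              refine ⟨hrspec.1, ?_, fun i hi => ?_⟩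
              · rw [zv_low ξ hrk, hrspec.2]
                exact e_ne_zero hd
              · rcases lt_trichotomy i k with h1 | rfl | h1
                · rw [zv_low ξ h1]
                  rcases hC i (by omega) with h2 | h2
                  · exact absurd ⟨by omega, h2⟩ (hrmax i hi (by omega))
                  · exact h2.symm
                · rw [zv_k, hk0]
                · exact zv_high ξ h1
            have c1 : ReflTransGen (Rn ξ n) x (zv ξ k) :=
              down_step ξ hd hn1 hx ⟨r, hrspec.1, hGtop.2.1⟩
            have hpar : zc ξ N (k + 1) = zc ξ N r + 2 := by
              have e1 : zc ξ N (k + 1) = zc ξ N k + 1 := by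
                rw [zc_succ ξ hNk, if_pos hk0]
              have e2 : zc ξ N k = zc ξ N (r + 1) := by
                refine zc_const ξ (by omega) (by omega) (fun i h1 h2 hz0 => ?_)
                exact hrmax i (by omega) (by omega) ⟨by omega, hz0⟩
              have e3 : zc ξ N (r + 1) = zc ξ N r + 1 := by
                rw [zc_succ ξ (by omega), if_pos hrspec.2]
              omega
            obtain ⟨ih1, ih2⟩ := ih r (by omega) (zv ξ k) hGtop
            exact ⟨fun hsame => c1.trans (ih1 (by omega)),
              fun hdiff => c1.trans (ih2 (by omega))⟩
          · have hkq1 : k = q1 := by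
              have h1 : q1 ≤ k := Nat.find_min' hq ⟨by omega, hk0⟩
              rcases eq_or_lt_of_le h1 with h | h
              · exact h.symm
              · exact absurd ⟨q1, hq1n, h, hq1z⟩ hex
            have hs1top' : TopAt ξ n (k + 1) s1 := by
              rw [hkq1]
              exact hs1top
            have hc : ReflTransGen (Rn ξ n) x s1 := collapse ξ hd hn1 hx hs1top'
            have hpar : zc ξ N (k + 1) = zc ξ N n + 1 := by
              rw [hkq1]
              exact hzq1
            exact ⟨fun hsame => absurd hsame (by omega), fun _ => hc⟩
        · have hke0 : ξ k ≠ 0 := by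
            rw [hke]
            exact e_ne_zero hd
          have hGtop : TopAt ξ n k (zv ξ k) := by
            refine ⟨by omega, ?_, fun i hi => zv_high ξ hi⟩
            rw [zv_k]
            exact fun hc => hke0 hc.symm
          have c1 : ReflTransGen (Rn ξ n) x (zv ξ k) :=
            down_step ξ hd hn1 hx ⟨k, by omega, hGtop.2.1⟩
          have hpar : zc ξ N (k + 1) = zc ξ N k := by
            rw [zc_succ ξ hNk, if_neg hke0]
            omega
          obtain ⟨ih1, ih2⟩ := ih k (by omega) (zv ξ k) hGtop
          exact ⟨fun hsame => c1.trans (ih1 (by omega)),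
            fun hdiff => c1.trans (ih2 (by omega))⟩
  intro u v hu hv hlab
  obtain ⟨p, hp⟩ := hu
  obtain ⟨q, hqv⟩ := hv
  rw [pdd_eq ξ hp, pdd_eq ξ hqv] at hlab
  by_cases hpar : zc ξ N p % 2 = zc ξ N n % 2
  · exact ((key p u hp).1 hpar).trans
      ((@Std.Symm.symm _ _ (@ReflTransGen.stdSymm _ _ ⟨rn_symm ξ⟩) _ _) ((key q v hqv).1 (by omega)))
  · exact ((key p u hp).2 hpar).trans
      ((@Std.Symm.symm _ _ (@ReflTransGen.stdSymm _ _ ⟨rn_symm ξ⟩) _ _) ((key q v hqv).2 (by omega)))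

/-- The second seed for scenario C, with opposite parity. -/
lemma seed_alt (hd : 2 ≤ d) {N n : ℕ} (hNn : N ≤ n)
    (hq : ∃ i, n ≤ i ∧ ξ i = 0)
    (hq1min : True) : ∃ (q' : ℕ) (y : Bd d), TopAt ξ n q' y ∧
      zc ξ N q' = zc ξ N n + 1 := by
  classical
  obtain ⟨hq1n, hq1z⟩ : n ≤ Nat.find hq ∧ ξ (Nat.find hq) = 0 := Nat.find_spec hq
  set q1 := Nat.find hq with hq1def
  have hq1min' : ∀ m, m < q1 → ¬(n ≤ m ∧ ξ m = 0) := fun m hm => Nat.find_min hq hm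
  refine ⟨q1 + 1, twr ξ q1 (ξ (q1 + 1) + 1), ⟨by omega, ?_, fun i hi => twr_high ξ hi⟩, ?_⟩
  · rw [twr_p1]
    intro hc
    have h1 : (1 : ZMod d) = 0 := by
      calc (1 : ZMod d) = ξ (q1 + 1) + 1 - ξ (q1 + 1) := by ring
      _ = 0 := by rw [hc]; ring
    exact one_ne_zero' hd h1
  · have e1 : zc ξ N (q1 + 1) = zc ξ N q1 + 1 := by
      rw [zc_succ ξ (by omega), if_pos hq1z]
    have e2 : zc ξ N q1 = zc ξ N n := by
      refine zc_const ξ hNn hq1n (fun i h1 h2 hz0 => ?_)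
      exact hq1min' i h2 ⟨h1, hz0⟩
    omega

/-! ### Instantiation: the Schreier graph on the cofinality class -/

lemma cof_of_top {n p : ℕ} {x : Bd d} (h : TopAt ξ n p x) : x ∈ Cof ξ :=
  ⟨p + 1, fun i hi => (h.2.2 i (by omega)).symm⟩

lemma cof_pres {x y : Bd d} (hm : MoveP d x y) (hx : x ∈ Cof ξ) : y ∈ Cof ξ := by
  obtain ⟨B, hB⟩ := hx
  have h : ∃ k, ∀ i, i ≠ k → x i = y i := by
    rcases hm with h | ⟨k, h, _, _⟩
    · exact ⟨0, h⟩
    · exact ⟨k + 1, h⟩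
  obtain ⟨k, hk⟩ := h
  exact ⟨max B (k + 1), fun i hi => (hB i (by omega)).trans (hk i (by omega))⟩

lemma Kset_finite (hd : 2 ≤ d) (ξ : Bd d) (n : ℕ) :
    ({v : ↥(Cof ξ) | ∀ i, n ≤ i → (v : Bd d) i = ξ i}).Finite := by
  haveI : NeZero d := ⟨by omega⟩
  rw [← Set.finite_coe_iff]
  refine Finite.of_injective
    (fun (v : ↥({v : ↥(Cof ξ) | ∀ i, n ≤ i → (v : Bd d) i = ξ i})) (i : Fin n) =>
      ((v : ↥(Cof ξ)) : Bd d) (i : ℕ)) ?_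
  intro a b hab
  apply Subtype.ext
  apply Subtype.ext
  funext i
  by_cases h : i < n
  · exact congrFun hab ⟨i, h⟩
  · exact (a.prop i (by omega)).trans (b.prop i (by omega)).symm

/-- The finite set `K_n ⊆ Cof ξ` of points agreeing with `ξ` from `n` on. -/
noncomputable def FK (hd : 2 ≤ d) (ξ : Bd d) (n : ℕ) : Finset ↥(Cof ξ) :=
  (Kset_finite hd ξ n).toFinset

lemma mem_FK {hd : 2 ≤ d} {n : ℕ} {v : ↥(Cof ξ)} :
    v ∈ FK hd ξ n ↔ ∀ i, n ≤ i → (v : Bd d) i = ξ i := Set.Finite.mem_toFinset _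

lemma not_mem_FK {hd : 2 ≤ d} {n : ℕ} {v : ↥(Cof ξ)} :
    v ∉ FK hd ξ n ↔ OutD ξ n (v : Bd d) := by
  rw [mem_FK]
  constructor
  · intro h
    by_contra hc
    apply h
    intro i hi
    by_contra hc2
    exact hc ⟨i, hi, hc2⟩
  · rintro ⟨i, hi, hne⟩ h
    exact hne (h i hi)

lemma not_mem_FK_coe {hd : 2 ≤ d} {n : ℕ} {v : ↥(Cof ξ)} :
    v ∉ ((FK hd ξ n : Finset ↥(Cof ξ)) : Set ↥(Cof ξ)) ↔ OutD ξ n (v : Bd d) := by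
  rw [Finset.mem_coe]
  exact not_mem_FK ξ

lemma chain_to_graph (hd : 2 ≤ d) (hω : InOmega d m ω) {n : ℕ} {u v : ↥(Cof ξ)}
    (h : ReflTransGen (Rn ξ n) ↑u ↑v) :
    ReflTransGen (EndsCount.GRel (schreierSimple d m ω ξ)
      ((FK hd ξ n : Finset ↥(Cof ξ)) : Set ↥(Cof ξ))) u v := by
  obtain ⟨x, hx⟩ := u
  obtain ⟨y, hy⟩ := v
  obtain ⟨hy', ch⟩ := subtype_lift (S := Cof ξ) (R := Rn ξ n)
    (R' := EndsCount.GRel (schreierSimple d m ω ξ)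
      ((FK hd ξ n : Finset ↥(Cof ξ)) : Set ↥(Cof ξ)))
    (fun a b hab ha => cof_pres ξ hab.2.1 ha)
    (fun a b ha hb hab =>
      ⟨(adj_iff ω ξ hd hω _ _).mpr ⟨hab.1, hab.2.1⟩,
        (not_mem_FK_coe ξ).mpr hab.2.2.1,
        (not_mem_FK_coe ξ).mpr hab.2.2.2⟩)
    hx h
  exact ch

/-- Master counting lemma: if at every stage `g j` the labelling `lab` classifies the
components of the complement of `K_{g j}`, then the number of ends is `r`. -/
lemma card_case (hd : 2 ≤ d) (hω : InOmega d m ω) (r : ℕ)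
    (g : ℕ → ℕ) (hmono : Monotone g) (hge : ∀ j, j ≤ g j)
    (lab : ↥(Cof ξ) → Fin r)
    (closed : ∀ (j : ℕ) (u v : ↥(Cof ξ)), OutD ξ (g j) ↑u → OutD ξ (g j) ↑v →
      ((u : Bd d) ≠ ↑v) → MoveP d ↑u ↑v → lab u = lab v)
    (conn : ∀ (j : ℕ) (u v : ↥(Cof ξ)), OutD ξ (g j) ↑u → OutD ξ (g j) ↑v →
      lab u = lab v → ReflTransGen (Rn ξ (g j)) ↑u ↑v)
    (surj : ∀ (j : ℕ) (b : Fin r), ∃ v : ↥(Cof ξ), OutD ξ (g j) ↑v ∧ lab v = b) :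
    Nat.card (schreierSimple d m ω ξ).end = r := by
  apply EndsCount.card_end_eq r (fun j => FK hd ξ (g j)) ?_ ?_ lab ?_ ?_ ?_
  · -- monotone
    intro a b hab v hv
    rw [mem_FK] at hv ⊢
    intro i hi
    exact hv i (le_trans (hmono hab) hi)
  · -- cofinal
    intro K
    have hb : ∀ v : ↥(Cof ξ), ∃ B, ∀ i, B ≤ i → (v : Bd d) i = ξ i := by
      intro v
      obtain ⟨B, hB⟩ := v.prop
      exact ⟨B, fun i hi => (hB i hi).symm⟩
    refine ⟨K.sup (fun v => (hb v).choose), fun v hv => ?_⟩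
    rw [mem_FK]
    intro i hi
    refine (hb v).choose_spec i ?_
    have h1 : (hb v).choose ≤ K.sup (fun v => (hb v).choose) :=
      Finset.le_sup (f := fun v => (hb v).choose) hv
    have h2 := hge (K.sup (fun v => (hb v).choose))
    omega
  · -- closed
    intro j u v hu hv hadj
    obtain ⟨hne, hm⟩ := (adj_iff ω ξ hd hω u v).mp hadj
    exact closed j u v ((not_mem_FK_coe ξ).mp hu) ((not_mem_FK_coe ξ).mp hv) hne hm
  · -- conn
    intro j u v hu hv hl
    exact chain_to_graph ω ξ hd hω
      (conn j u v ((not_mem_FK_coe ξ).mp hu) ((not_mem_FK_coe ξ).mp hv) hl)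
  · -- surj
    intro j b
    obtain ⟨v, hout, hlab⟩ := surj j b
    exact ⟨v, (not_mem_FK_coe ξ).mpr hout, hlab⟩

/-! ### The three cases -/

lemma card_one_middle (hd : 2 ≤ d) (hω : InOmega d m ω)
    (H : ∀ j, ∃ i, j ≤ i ∧ ξ i ≠ 0 ∧ ξ i ≠ eL d) :
    Nat.card (schreierSimple d m ω ξ).end = 1 := by
  classical
  set g : ℕ → ℕ := fun j => Nat.rec ((H 1).choose) (fun _ prev => (H (prev + 1)).choose) j
    with hgdef
  have hg0 : 1 ≤ g 0 := (H 1).choose_spec.1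
  have hgs : ∀ j, g j + 1 ≤ g (j + 1) := fun j => (H (g j + 1)).choose_spec.1
  have hmid : ∀ j, ξ (g j) ≠ 0 ∧ ξ (g j) ≠ eL d := by
    intro j
    cases j with
    | zero => exact (H 1).choose_spec.2
    | succ j => exact (H (g j + 1)).choose_spec.2
  have hmono : Monotone g := monotone_nat_of_le_succ (fun j => by have := hgs j; omega)
  have hge : ∀ j, j ≤ g j := by
    intro j
    induction j with
    | zero => omega
    | succ j ih => have := hgs j; omega
  have hg1 : ∀ j, 1 ≤ g j := fun j => le_trans hg0 (hmono (Nat.zero_le j))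
  apply card_case ω ξ hd hω 1 g hmono hge (fun _ => 0)
  · intro _ _ _ _ _ _ _
    exact Subsingleton.elim _ _
  · intro j u v hu hv _
    exact connA ξ hd (hg1 j) (hmid j).1 (hmid j).2
      (exists_top ξ u.prop hu) (exists_top ξ v.prop hv)
  · intro j b
    have htop := seed_main ξ hd (n := g j)
    refine ⟨⟨_, cof_of_top ξ htop⟩, top_out ξ htop, Subsingleton.elim _ _⟩

lemma card_one_tail (hd : 2 ≤ d) (hω : InOmega d m ω)
    (M : ℕ) (hM : ∀ i, M ≤ i → ξ i = eL d) :
    Nat.card (schreierSimple d m ω ξ).end = 1 := by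
  classical
  set g : ℕ → ℕ := fun j => max (max M 1) j with hgdef
  have hmono : Monotone g := fun a b hab => max_le_max le_rfl hab
  have hge : ∀ j, j ≤ g j := fun j => le_max_right _ _
  have hg1 : ∀ j, 1 ≤ g j := fun j => le_trans (le_trans (le_max_right M 1) (le_max_left _ j))
    le_rfl
  apply card_case ω ξ hd hω 1 g hmono hge (fun _ => 0)
  · intro _ _ _ _ _ _ _
    exact Subsingleton.elim _ _
  · intro j u v hu hv _
    refine connB ξ hd (hg1 j) (fun i hi => hM i ?_)
      (exists_top ξ u.prop hu) (exists_top ξ v.prop hv)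
    have h1 : M ≤ max M 1 := le_max_left _ _
    have h2 : max M 1 ≤ g j := le_max_left _ _
    omega
  · intro j b
    have htop := seed_main ξ hd (n := g j)
    refine ⟨⟨_, cof_of_top ξ htop⟩, top_out ξ htop, Subsingleton.elim _ _⟩

lemma card_two' (hd : 2 ≤ d) (hω : InOmega d m ω) (N : ℕ) (hN1 : 1 ≤ N)
    (hC : ∀ i, N ≤ i → ξ i = 0 ∨ ξ i = eL d)
    (hz : ∀ n, ∃ i, n ≤ i ∧ ξ i = 0) :
    Nat.card (schreierSimple d m ω ξ).end = 2 := by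
  classical
  set g : ℕ → ℕ := fun j => max N j with hgdef
  have hmono : Monotone g := fun a b hab => max_le_max le_rfl hab
  have hge : ∀ j, j ≤ g j := fun j => le_max_right _ _
  have hgN : ∀ j, N ≤ g j := fun j => le_max_left _ _
  apply card_case ω ξ hd hω 2 g hmono hge
    (fun v => ⟨zc ξ N (pdd ξ (v : Bd d)) % 2, by omega⟩)
  · -- closed
    intro j u v hu hv hne hm
    apply Fin.ext
    exact closedC ξ hd hN1 (hgN j) hC
      (exists_top ξ u.prop hu) (exists_top ξ v.prop hv) hne hm
  · -- conn
    intro j u v hu hv hl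
    have hl' : zc ξ N (pdd ξ (u : Bd d)) % 2 = zc ξ N (pdd ξ (v : Bd d)) % 2 :=
      congrArg Fin.val hl
    exact connC ξ hd hN1 (hgN j) hC (hz (g j))
      (exists_top ξ u.prop hu) (exists_top ξ v.prop hv) hl'
  · -- surj
    intro j b
    have htop0 := seed_main ξ hd (n := g j)
    obtain ⟨q', y, htop1, hzc1⟩ := seed_alt ξ hd (hgN j) (hz (g j)) trivial
    by_cases hb : (b : ℕ) = zc ξ N (g j) % 2
    · refine ⟨⟨_, cof_of_top ξ htop0⟩, top_out ξ htop0, ?_⟩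
      apply Fin.ext
      show zc ξ N (pdd ξ _) % 2 = (b : ℕ)
      rw [pdd_eq ξ htop0, hb]
    · refine ⟨⟨y, cof_of_top ξ htop1⟩, top_out ξ htop1, ?_⟩
      apply Fin.ext
      show zc ξ N (pdd ξ y) % 2 = (b : ℕ)
      rw [pdd_eq ξ htop1, hzc1]
      have hblt : (b : ℕ) < 2 := b.isLt
      omega

end Spinal


open Spinal in
theorem number_of_ends (d m : ℕ) (hd : 2 ≤ d) (hm : 1 ≤ m)
    (ω : ℕ → ((Fin m → ZMod d) →+ ZMod d)) (hω : InOmega d m ω) (ξ : Bd d) :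
    (Nat.card ↥(SimpleGraph.end (schreierSimple d m ω ξ)) = 2 ↔ ξ ∈ E2set d) ∧
    (Nat.card ↥(SimpleGraph.end (schreierSimple d m ω ξ)) = 1 ↔ ξ ∉ E2set d) := by
  classical
  by_cases hE2 : ξ ∈ E2set d
  · have hcard : Nat.card ↥(SimpleGraph.end (schreierSimple d m ω ξ)) = 2 := by
      obtain ⟨⟨N₀, hN₀⟩, hnc⟩ := hE2
      have hnc' : ∀ M : ℕ, ∃ i, M ≤ i ∧ (d : ZMod d) - 1 ≠ ξ i := by
        intro M
        by_contra hc
        push_neg at hc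
        exact hnc ⟨M, fun i hi => hc i hi⟩
      have hz : ∀ n : ℕ, ∃ i, n ≤ i ∧ ξ i = 0 := by
        intro n
        obtain ⟨i, hi1, hi2⟩ := hnc' (max n (max N₀ 1))
        refine ⟨i, by omega, ?_⟩
        rcases hN₀ i (by omega) with h | h
        · exact h
        · exact absurd h (fun hh => hi2 hh.symm)
      exact card_two' ω ξ hd hω (max N₀ 1) (le_max_right _ _)
        (fun i hi => hN₀ i (by omega)) hz
    rw [hcard]
    exact ⟨iff_of_true rfl hE2, iff_of_false (by omega) (fun h => h hE2)⟩
  · have hcard : Nat.card ↥(SimpleGraph.end (schreierSimple d m ω ξ)) = 1 := by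
      by_cases hcof : ξ ∈ Cof (fun _ => (d : ZMod d) - 1)
      · obtain ⟨M, hM⟩ := hcof
        exact card_one_tail ω ξ hd hω M (fun i hi => (hM i hi).symm)
      · have hA : ¬ ∃ N : ℕ, ∀ n, N ≤ n → ξ n = 0 ∨ ξ n = (d : ZMod d) - 1 := by
          intro hA
          exact hE2 ⟨hA, hcof⟩
        push_neg at hA
        refine card_one_middle ω ξ hd hω (fun j => ?_)
        obtain ⟨i, h1, h2⟩ := hA j
        exact ⟨i, h1, h2.1, h2.2⟩
    rw [hcard]
    exact ⟨iff_of_false (by omega) (fun h => hE2 h), iff_of_true rfl hE2⟩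

end
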